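/- Let v̲ ≤ v̄ be reals, let π : [v̲, v̄] → ℝ be non-decreasing and integrable, let K ∈ ℝ with K ≤ π(v̲), and let p : [v̲, v̄] → ℝ satisfy p(v) = v·π(v) − v̲·π(v̲) + p(v̲) − ∫_{v̲}^{v} π(s) ds for all v. Define the interim utility ũ(v) = v·π(v) − p(v). Then ũ(v) ≥ v·K holds for all v ∈ [v̲, v̄] if and only if ũ(v̲) ≥ v̲·K. -/

import Mathlib

open MeasureTheory Set

/-- Individual rationality reduces to the lowest type: under the Myerson payment formula
with non-decreasing interim share `π` and outside option `K ≤ π(v̲)`, the interim utility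
`ũ(v) = v·π(v) − p(v)` satisfies `ũ(v) ≥ v·K` for all types iff it does at the lowest type. -/
theorem stmt_5
    (vl vh : ℝ) (hle : vl ≤ vh) (π p : ℝ → ℝ)
    (hπ_mono : MonotoneOn π (Icc vl vh)) (hπ_int : IntegrableOn π (Icc vl vh))
    (K : ℝ) (hK : K ≤ π vl)
    (hp : ∀ v ∈ Icc vl vh, p v = v * π v - vl * π vl + p vl - ∫ s in vl..v, π s) :
    (∀ v ∈ Icc vl vh, v * K ≤ v * π v - p v) ↔ vl * K ≤ vl * π vl - p vl := by
  constructor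
  · intro h
    have := h vl ⟨le_refl _, hle⟩
    linarith
  · intro h0 v hv
    obtain ⟨hv1, hv2⟩ := hv
    have hpv := hp v ⟨hv1, hv2⟩
    have hsub : Icc vl v ⊆ Icc vl vh := Icc_subset_Icc le_rfl hv2
    have hint : IntegrableOn π (Icc vl v) := hπ_int.mono_set hsub
    have hintK : IntegrableOn (fun _ : ℝ => K) (Icc vl v) := integrableOn_const measure_Icc_lt_top.ne
    have hmono : ∀ s ∈ Icc vl v, K ≤ π s := by
      intro s hs
      exact hK.trans (hπ_mono ⟨le_refl _, hle⟩ (hsub hs) hs.1)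
    have hbound : (v - vl) * K ≤ ∫ s in vl..v, π s := by
      rw [intervalIntegral.integral_of_le hv1]
      have : ∫ s in Ioc vl v, (fun _ => K) s ∂volume ≤ ∫ s in Ioc vl v, π s ∂volume := by
        apply setIntegral_mono_on (hintK.mono_set Ioc_subset_Icc_self)
          (hint.mono_set Ioc_subset_Icc_self) measurableSet_Ioc
        intro s hs
        exact hmono s (Ioc_subset_Icc_self hs)
      simpa [Real.volume_Ioc, smul_eq_mul, ENNReal.toReal_ofReal,
        sub_nonneg.2 hv1, mul_comm] using this
    have huv : v * π v - p v = vl * π vl - p vl + ∫ s in vl..v, π s := by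
      rw [hpv]; ring
    rw [huv]
    nlinarith [hbound, h0]
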